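/- Let L : ℕ → ℚ and define P(n) = ∑_{k ∣ n} k · L(k). Define a : ℕ → ℚ by a(k) = L(k) for k odd, and a(k) = -∑_{j ≥ 0, 2^j ∣ k, k/2^j even} L(k/2^j) for k even. Then for all n ≥ 1, ∑_{k ∣ n} (-1)^(n/k + 1) · k · a(k) = (-1)^(n+1) · P(n). -/

import Mathlib

/-- `a(k) = L(k)` for odd `k`, and
`a(k) = -∑_{j ≥ 0, 2^j ∣ k, k/2^j even} L(k / 2^j)` for even `k`. -/
def aExp (L : ℕ → ℚ) (k : ℕ) : ℚ :=
  if Odd k then L k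
  else -∑ j ∈ Finset.range (k + 1),
    if 2 ^ j ∣ k ∧ Even (k / 2 ^ j) then L (k / 2 ^ j) else 0

/-- Auxiliary sum `T(m) = ∑_{j, 2^j ∣ m, m/2^j even} L(m/2^j)`. -/
def TT (L : ℕ → ℚ) (m : ℕ) : ℚ :=
  ∑ j ∈ Finset.range (m + 1),
    if 2 ^ j ∣ m ∧ Even (m / 2 ^ j) then L (m / 2 ^ j) else 0

lemma TT_odd (L : ℕ → ℚ) (m : ℕ) (hm : Odd m) : TT L m = 0 := by
  apply Finset.sum_eq_zero
  intro j _
  rw [if_neg]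
  rintro ⟨h1, h2⟩
  rcases Nat.eq_zero_or_pos j with rfl | hj
  · simp only [pow_zero, Nat.div_one] at h2
    exact (Nat.not_even_iff_odd.mpr hm) h2
  · have h2d : 2 ∣ m := dvd_trans (dvd_pow_self 2 hj.ne') h1
    exact (Nat.not_even_iff_odd.mpr hm) (even_iff_two_dvd.mpr h2d)

lemma TT_even (L : ℕ → ℚ) (m : ℕ) (hm : 0 < m) :
    TT L (2 * m) = L (2 * m) + TT L m := by
  have hdiv : ∀ j : ℕ, 2 * m / 2 ^ (j + 1) = m / 2 ^ j := by
    intro j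
    rw [pow_succ, mul_comm (2 ^ j) 2, ← Nat.div_div_eq_div_mul,
      Nat.mul_div_cancel_left m (by norm_num : 0 < 2)]
  have hdvd : ∀ j : ℕ, 2 ^ (j + 1) ∣ 2 * m ↔ 2 ^ j ∣ m := by
    intro j
    rw [pow_succ, mul_comm (2 ^ j) 2]
    exact mul_dvd_mul_iff_left (by norm_num : (2 : ℕ) ≠ 0)
  unfold TT
  rw [Finset.sum_range_succ']
  have h0 : (if 2 ^ 0 ∣ 2 * m ∧ Even (2 * m / 2 ^ 0) then L (2 * m / 2 ^ 0) else 0)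
      = L (2 * m) := by
    simp [Nat.div_one, even_two_mul]
  rw [h0]
  have hterm : ∀ j : ℕ,
      (if 2 ^ (j + 1) ∣ 2 * m ∧ Even (2 * m / 2 ^ (j + 1)) then L (2 * m / 2 ^ (j + 1)) else 0)
      = (if 2 ^ j ∣ m ∧ Even (m / 2 ^ j) then L (m / 2 ^ j) else 0) := by
    intro j
    rw [hdiv j]
    congr 1
    rw [eq_iff_iff]
    exact and_congr_left fun _ => hdvd j
  rw [Finset.sum_congr rfl fun j _ => hterm j]
  have hsub : ∑ j ∈ Finset.range (2 * m),
      (if 2 ^ j ∣ m ∧ Even (m / 2 ^ j) then L (m / 2 ^ j) else 0)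
      = ∑ j ∈ Finset.range (m + 1),
      (if 2 ^ j ∣ m ∧ Even (m / 2 ^ j) then L (m / 2 ^ j) else 0) := by
    refine (Finset.sum_subset ?_ ?_).symm
    · intro j hj
      simp only [Finset.mem_range] at hj ⊢
      omega
    · intro j _ hj
      simp only [Finset.mem_range, not_lt] at hj
      rw [if_neg]
      rintro ⟨h1, -⟩
      have := Nat.le_of_dvd hm h1
      have := Nat.lt_two_pow_self (n := j)
      omega
  rw [hsub, add_comm]

lemma aExp_eq (L : ℕ → ℚ) (k : ℕ) :
    aExp L k = (if Odd k then L k else 0) - TT L k := by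
  show (if Odd k then L k else -TT L k) = _
  by_cases h : Odd k
  · simp [h, TT_odd L k h]
  · simp [h]

lemma divisors_two_mul (m : ℕ) (hm : m ≠ 0) :
    (2 * m).divisors =
      m.divisors.filter (fun k => Odd k) ∪ m.divisors.image (fun j => 2 * j) := by
  ext k
  simp only [Nat.mem_divisors, Finset.mem_union, Finset.mem_filter, Finset.mem_image]
  constructor
  · rintro ⟨hk, -⟩
    by_cases ho : Odd k
    · left
      exact ⟨⟨Nat.Coprime.dvd_of_dvd_mul_left ho.coprime_two_right hk, hm⟩, ho⟩
    · right
      have h2 : 2 ∣ k := (Nat.not_odd_iff_even.mp ho).two_dvd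
      obtain ⟨j, rfl⟩ := h2
      exact ⟨j, ⟨(mul_dvd_mul_iff_left (by norm_num : (2 : ℕ) ≠ 0)).mp hk, hm⟩, rfl⟩
  · rintro (⟨⟨hd, -⟩, -⟩ | ⟨j, ⟨hd, -⟩, rfl⟩)
    · exact ⟨hd.mul_left 2, by positivity⟩
    · exact ⟨mul_dvd_mul_left 2 hd, by positivity⟩

lemma sum_divisors_two_mul (m : ℕ) (hm : m ≠ 0) (f : ℕ → ℚ) :
    ∑ k ∈ (2 * m).divisors, f k =
      (∑ k ∈ m.divisors.filter (fun k => Odd k), f k) + ∑ j ∈ m.divisors, f (2 * j) := by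
  rw [divisors_two_mul m hm, Finset.sum_union, Finset.sum_image]
  · intro a _ b _ h
    simp only at h
    omega
  · rw [Finset.disjoint_left]
    rintro k hk hk'
    simp only [Finset.mem_filter] at hk
    simp only [Finset.mem_image] at hk'
    obtain ⟨j, -, rfl⟩ := hk'
    exact (Nat.not_even_iff_odd.mpr hk.2) (even_two_mul j)

theorem a_signed_divisor_sum (L : ℕ → ℚ) :
    ∀ n : ℕ, 1 ≤ n →
      ∑ k ∈ n.divisors, (-1 : ℚ) ^ (n / k + 1) * k * aExp L k =
        (-1 : ℚ) ^ (n + 1) * ∑ k ∈ n.divisors, (↑k * L k) := by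
  intro n hn
  rcases Nat.even_or_odd n with he | ho
  · -- even case : n = 2 * m
    obtain ⟨m, rfl⟩ : ∃ m, n = 2 * m := by
      obtain ⟨m, hmm⟩ := he; exact ⟨m, by omega⟩
    have hm : m ≠ 0 := by omega
    have hmpos : 0 < m := by omega
    -- abbreviations
    set F1 : ℚ := ∑ k ∈ m.divisors.filter (fun k => Odd k), (k : ℚ) * L k with hF1
    set F2 : ℚ := ∑ j ∈ m.divisors, ((2 * j : ℕ) : ℚ) * L (2 * j) with hF2
    set UU : ℚ := ∑ j ∈ m.divisors, (j : ℚ) * TT L j with hUU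
    -- the unsigned sum over divisors of m
    have hAm : ∑ k ∈ m.divisors, (k : ℚ) * aExp L k = F1 - UU := by
      have : ∀ k ∈ m.divisors, (k : ℚ) * aExp L k =
          (if Odd k then (k : ℚ) * L k else 0) - (k : ℚ) * TT L k := by
        intro k _
        rw [aExp_eq, mul_sub]
        congr 1
        split <;> simp
      rw [Finset.sum_congr rfl this, Finset.sum_sub_distrib, ← Finset.sum_filter]
    -- the unsigned sum over divisors of 2m
    have hA2m : ∑ k ∈ (2 * m).divisors, (k : ℚ) * aExp L k = F1 - F2 - 2 * UU := by
      rw [sum_divisors_two_mul m hm]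
      have hoddpart : ∑ k ∈ m.divisors.filter (fun k => Odd k), (k : ℚ) * aExp L k = F1 := by
        apply Finset.sum_congr rfl
        intro k hk
        have hko : Odd k := (Finset.mem_filter.mp hk).2
        rw [show aExp L k = L k by simp [aExp, hko]]
      have hevenpart : ∑ j ∈ m.divisors, ((2 * j : ℕ) : ℚ) * aExp L (2 * j) =
          -(F2 + 2 * UU) := by
        have : ∀ j ∈ m.divisors, ((2 * j : ℕ) : ℚ) * aExp L (2 * j) =
            -(((2 * j : ℕ) : ℚ) * L (2 * j) + 2 * ((j : ℚ) * TT L j)) := by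
          intro j hj
          have hjpos : 0 < j := Nat.pos_of_mem_divisors hj
          rw [aExp_eq, if_neg (by simp [Nat.not_odd_iff_even.mpr (even_two_mul j)]),
            TT_even L j hjpos]
          push_cast
          ring
        rw [Finset.sum_congr rfl this, Finset.sum_neg_distrib, Finset.sum_add_distrib,
          ← Finset.mul_sum]
      rw [hoddpart, hevenpart]
      ring
    -- signs
    have hsign : ∀ k ∈ (2 * m).divisors,
        (-1 : ℚ) ^ (2 * m / k + 1) * k * aExp L k =
          (k : ℚ) * aExp L k - 2 * (if k ∣ m then (k : ℚ) * aExp L k else 0) := by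
      intro k hk
      obtain ⟨hkd, -⟩ := Nat.mem_divisors.mp hk
      by_cases hkm : k ∣ m
      · have h1 : 2 * m / k = 2 * (m / k) := by
          rw [Nat.mul_div_assoc 2 hkm]
        rw [h1, if_pos hkm, pow_succ, pow_mul]
        ring_nf
      · have hodd : Odd (2 * m / k) := by
          rcases Nat.even_or_odd (2 * m / k) with hev | hodd
          · exfalso
            obtain ⟨c, hc⟩ := hev
            have heq : k * (2 * m / k) = 2 * m := Nat.mul_div_cancel' hkd
            rw [hc] at heq
            have h2 : 2 * (k * c) = 2 * m := by rw [← heq]; ring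
            exact hkm ⟨c, (Nat.eq_of_mul_eq_mul_left (by norm_num) h2).symm⟩
          · exact hodd
        obtain ⟨c, hc⟩ := hodd
        rw [if_neg hkm, hc, show 2 * c + 1 + 1 = 2 * (c + 1) by ring, pow_mul]
        ring_nf
    have hfilter : ∑ k ∈ (2 * m).divisors, (if k ∣ m then (k : ℚ) * aExp L k else 0) =
        ∑ k ∈ m.divisors, (k : ℚ) * aExp L k := by
      rw [← Finset.sum_filter]
      congr 1
      ext k
      simp only [Finset.mem_filter, Nat.mem_divisors]
      constructor
      · rintro ⟨⟨-, -⟩, hkm⟩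
        exact ⟨hkm, hm⟩
      · rintro ⟨hkm, -⟩
        exact ⟨⟨hkm.mul_left 2, by positivity⟩, hkm⟩
    -- the right-hand side
    have hP : ∑ k ∈ (2 * m).divisors, ((k : ℚ) * L k) = F1 + F2 := by
      rw [sum_divisors_two_mul m hm (fun k => (k : ℚ) * L k)]
    have hsign2 : (-1 : ℚ) ^ (2 * m + 1) = -1 := Odd.neg_one_pow ⟨m, by ring⟩
    calc ∑ k ∈ (2 * m).divisors, (-1 : ℚ) ^ (2 * m / k + 1) * k * aExp L k
        = ∑ k ∈ (2 * m).divisors, ((k : ℚ) * aExp L k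
            - 2 * (if k ∣ m then (k : ℚ) * aExp L k else 0)) :=
          Finset.sum_congr rfl hsign
      _ = (∑ k ∈ (2 * m).divisors, (k : ℚ) * aExp L k)
            - 2 * ∑ k ∈ (2 * m).divisors, (if k ∣ m then (k : ℚ) * aExp L k else 0) := by
          rw [Finset.sum_sub_distrib, ← Finset.mul_sum]
      _ = (F1 - F2 - 2 * UU) - 2 * (F1 - UU) := by rw [hA2m, hfilter, hAm]
      _ = (-1 : ℚ) ^ (2 * m + 1) * ∑ k ∈ (2 * m).divisors, ((k : ℚ) * L k) := by
          rw [hsign2, hP]; ring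
  · -- odd case
    have hsign2 : (-1 : ℚ) ^ (n + 1) = 1 := Even.neg_one_pow (by
      obtain ⟨c, hc⟩ := ho; exact ⟨c + 1, by omega⟩)
    rw [hsign2, one_mul]
    apply Finset.sum_congr rfl
    intro k hk
    obtain ⟨hkd, hne⟩ := Nat.mem_divisors.mp hk
    have hprod : k * (n / k) = n := Nat.mul_div_cancel' hkd
    have hko : Odd k ∧ Odd (n / k) := by
      rw [← Nat.odd_mul, hprod]; exact ho
    have hs : (-1 : ℚ) ^ (n / k + 1) = 1 := by
      obtain ⟨c, hc⟩ := hko.2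
      exact Even.neg_one_pow ⟨c + 1, by omega⟩
    rw [hs, one_mul, show aExp L k = L k by simp [aExp, hko.1]]
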